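/- If t and r are strongly normalising terms of λCA, then α.t + β.r is strongly normalising for any nonnegative reals α, β. -/

import Mathlib

open scoped NNReal

namespace LCA

/-! ## Types of λCA -/

mutual
inductive UTy : Type
  | var : ℕ → UTy
  | arrow : UTy → Ty → UTy
  | all : UTy → UTy
inductive Ty : Type
  | u : UTy → Ty
  | add : Ty → Ty → Ty
  | zero : Ty
end

mutual
def UTy.shift (d c : ℕ) : UTy → UTy
  | .var n => .var (if n < c then n else n + d)
  | .arrow U T => .arrow (U.shift d c) (T.shift d c)
  | .all U => .all (U.shift d (c+1))
def Ty.shift (d c : ℕ) : Ty → Ty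
  | .u U => .u (U.shift d c)
  | .add T R => .add (T.shift d c) (R.shift d c)
  | .zero => .zero
end

mutual
def UTy.subst (k : ℕ) (V : UTy) : UTy → UTy
  | .var n => if n = k then V else .var (if k < n then n - 1 else n)
  | .arrow U T => .arrow (UTy.subst k V U) (Ty.subst k V T)
  | .all U => .all (UTy.subst (k+1) (V.shift 1 0) U)
termination_by t => sizeOf t
def Ty.subst (k : ℕ) (V : UTy) : Ty → Ty
  | .u U => .u (UTy.subst k V U)
  | .add T R => .add (Ty.subst k V T) (Ty.subst k V R)
  | .zero => .zero
termination_by t => sizeOf t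
end

/- Type equivalence: least congruence with `T + 0̄ ≡ T`, commutativity and
associativity of `+`. -/
mutual
inductive UEq : UTy → UTy → Prop
  | refl : ∀ U, UEq U U
  | symm : ∀ {U V}, UEq U V → UEq V U
  | trans : ∀ {U V W}, UEq U V → UEq V W → UEq U W
  | arrow : ∀ {U V T S}, UEq U V → TyEq T S → UEq (.arrow U T) (.arrow V S)
  | all : ∀ {U V}, UEq U V → UEq (.all U) (.all V)
inductive TyEq : Ty → Ty → Prop
  | refl : ∀ T, TyEq T T
  | symm : ∀ {T R}, TyEq T R → TyEq R T
  | trans : ∀ {T R S}, TyEq T R → TyEq R S → TyEq T S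
  | u : ∀ {U V}, UEq U V → TyEq (.u U) (.u V)
  | addCong : ∀ {T T' R R'}, TyEq T T' → TyEq R R' → TyEq (.add T R) (.add T' R')
  | addZero : ∀ T, TyEq (.add T .zero) T
  | comm : ∀ T R, TyEq (.add T R) (.add R T)
  | assoc : ∀ T R S, TyEq (.add T (.add R S)) (.add (.add T R) S)
end

/-- `nTy n T` is the `n`-fold sum `T + ⋯ + T`, with `nTy 0 T = 0̄`. -/
def nTy : ℕ → Ty → Ty
  | 0, _ => .zero
  | 1, T => T
  | n+2, T => .add T (nTy (n+1) T)

/-- The imprecision order `≼` on types (Table 4). -/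
inductive Pce : Ty → Ty → Prop
  | wk : ∀ {m n : ℕ} (T : Ty), m ≤ n → Pce (nTy m T) (nTy n T)
  | ofEq : ∀ {T R}, TyEq T R → Pce T R
  | trans : ∀ {T S R}, Pce T S → Pce S R → Pce T R
  | addCong : ∀ {T₁ T₂ S₁ S₂}, Pce T₁ T₂ → Pce S₁ S₂ → Pce (.add T₁ S₁) (.add T₂ S₂)
  | arrow : ∀ {U₁ U₂ : UTy} {T₁ T₂ : Ty}, Pce (.u U₂) (.u U₁) → Pce T₁ T₂ →
      Pce (.u (.arrow U₁ T₁)) (.u (.arrow U₂ T₂))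
  | all : ∀ {U V : UTy}, Pce (.u U) (.u V) → Pce (.u (.all U)) (.u (.all V))

/-! ## Terms of λCA -/

inductive Tm : Type
  | var : ℕ → Tm
  | lam : UTy → Tm → Tm
  | tlam : Tm → Tm
  | app : Tm → Tm → Tm
  | tapp : Tm → UTy → Tm
  | zero : Tm
  | smul : ℝ≥0 → Tm → Tm
  | add : Tm → Tm → Tm

/-- Basis terms: variables, abstractions and type abstractions. -/
inductive IsBasis : Tm → Prop
  | var : ∀ n, IsBasis (.var n)
  | lam : ∀ U t, IsBasis (.lam U t)
  | tlam : ∀ t, IsBasis (.tlam t)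

def Tm.shift (d : ℕ) : ℕ → Tm → Tm
  | c, .var n => .var (if n < c then n else n + d)
  | c, .lam U t => .lam U (Tm.shift d (c+1) t)
  | c, .tlam t => .tlam (Tm.shift d c t)
  | c, .app t r => .app (Tm.shift d c t) (Tm.shift d c r)
  | c, .tapp t U => .tapp (Tm.shift d c t) U
  | _, .zero => .zero
  | c, .smul a t => .smul a (Tm.shift d c t)
  | c, .add t r => .add (Tm.shift d c t) (Tm.shift d c r)

def Tm.tshift (d : ℕ) : ℕ → Tm → Tm
  | _, .var n => .var n
  | c, .lam U t => .lam (U.shift d c) (Tm.tshift d c t)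
  | c, .tlam t => .tlam (Tm.tshift d (c+1) t)
  | c, .app t r => .app (Tm.tshift d c t) (Tm.tshift d c r)
  | c, .tapp t U => .tapp (Tm.tshift d c t) (U.shift d c)
  | _, .zero => .zero
  | c, .smul a t => .smul a (Tm.tshift d c t)
  | c, .add t r => .add (Tm.tshift d c t) (Tm.tshift d c r)

/-- Capture-avoiding substitution `t[s/x]` (de Bruijn). It acts linearly on
linear combinations. -/
def Tm.subst : ℕ → Tm → Tm → Tm
  | k, s, .var n => if n = k then s else .var (if k < n then n - 1 else n)
  | k, s, .lam U t => .lam U (Tm.subst (k+1) (s.shift 1 0) t)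
  | k, s, .tlam t => .tlam (Tm.subst k (s.tshift 1 0) t)
  | k, s, .app t r => .app (Tm.subst k s t) (Tm.subst k s r)
  | k, s, .tapp t U => .tapp (Tm.subst k s t) U
  | _, _, .zero => .zero
  | k, s, .smul a t => .smul a (Tm.subst k s t)
  | k, s, .add t r => .add (Tm.subst k s t) (Tm.subst k s r)

/-- Substitution `t[U/X]` of a unit type for a type variable in a term. -/
def Tm.tsubst : ℕ → UTy → Tm → Tm
  | _, _, .var n => .var n
  | k, V, .lam U t => .lam (UTy.subst k V U) (Tm.tsubst k V t)
  | k, V, .tlam t => .tlam (Tm.tsubst (k+1) (V.shift 1 0) t)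
  | k, V, .app t r => .app (Tm.tsubst k V t) (Tm.tsubst k V r)
  | k, V, .tapp t U => .tapp (Tm.tsubst k V t) (UTy.subst k V U)
  | _, _, .zero => .zero
  | k, V, .smul a t => .smul a (Tm.tsubst k V t)
  | k, V, .add t r => .add (Tm.tsubst k V t) (Tm.tsubst k V r)

/-! ## Typing -/

abbrev Ctx := List UTy

def sumTy : List Ty → Ty
  | [] => .zero
  | [T] => T
  | T :: Ts => .add T (sumTy Ts)

/-- Typing rules of λCA (Table 3). -/
inductive HasTy : Ctx → Tm → Ty → Prop
  | var : ∀ {Γ : Ctx} {n U}, Γ[n]? = some U → HasTy Γ (.var n) (.u U)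
  | zero : ∀ {Γ}, HasTy Γ .zero .zero
  | lam : ∀ {Γ U t T}, HasTy (U :: Γ) t T → HasTy Γ (.lam U t) (.u (.arrow U T))
  | app : ∀ {Γ t r U} {β : ℕ} {Ts : List Ty},
      HasTy Γ t (sumTy (Ts.map fun Ti => .u (.arrow U Ti))) →
      HasTy Γ r (nTy β (.u U)) →
      HasTy Γ (.app t r) (sumTy (Ts.map fun Ti => nTy β Ti))
  | tlam : ∀ {Γ t U}, HasTy (Γ.map (UTy.shift 1 0)) t (.u U) →
      HasTy Γ (.tlam t) (.u (.all U))
  | tapp : ∀ {Γ t U V}, HasTy Γ t (.u (.all U)) →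
      HasTy Γ (.tapp t V) (.u (UTy.subst 0 V U))
  | addI : ∀ {Γ t r T R}, HasTy Γ t T → HasTy Γ r R → HasTy Γ (.add t r) (.add T R)
  | smulI : ∀ {Γ t T} (a : ℝ≥0), HasTy Γ t T → HasTy Γ (.smul a t) (nTy ⌊a⌋₊ T)
  | eq : ∀ {Γ t T R}, HasTy Γ t T → TyEq T R → HasTy Γ t R

/-! ## Reduction (Table 2), modulo AC of `+` -/

/-- AC-congruence on terms: commutativity and associativity of `+`. -/
inductive ACEq : Tm → Tm → Prop
  | refl : ∀ t, ACEq t t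
  | symm : ∀ {t r}, ACEq t r → ACEq r t
  | trans : ∀ {t r s}, ACEq t r → ACEq r s → ACEq t s
  | comm : ∀ t r, ACEq (.add t r) (.add r t)
  | assoc : ∀ t r s, ACEq (.add t (.add r s)) (.add (.add t r) s)
  | addCong : ∀ {t t' r r'}, ACEq t t' → ACEq r r' → ACEq (.add t r) (.add t' r')
  | smulCong : ∀ {t t'} (a : ℝ≥0), ACEq t t' → ACEq (.smul a t) (.smul a t')
  | appCong : ∀ {t t' r r'}, ACEq t t' → ACEq r r' → ACEq (.app t r) (.app t' r')
  | tappCong : ∀ {t t'} (U : UTy), ACEq t t' → ACEq (.tapp t U) (.tapp t' U)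
  | lamCong : ∀ {t t'} (U : UTy), ACEq t t' → ACEq (.lam U t) (.lam U t')
  | tlamCong : ∀ {t t'}, ACEq t t' → ACEq (.tlam t) (.tlam t')

/-- One-step rewrite rules (Table 2), with contextual congruence. -/
inductive Step : Tm → Tm → Prop
  -- Group E
  | addZero : ∀ u, Step (.add u .zero) u
  | zeroSmul : ∀ u, Step (.smul 0 u) .zero
  | oneSmul : ∀ u, Step (.smul 1 u) u
  | smulZero : ∀ a, Step (.smul a .zero) .zero
  | smulSmul : ∀ a b u, Step (.smul a (.smul b u)) (.smul (a*b) u)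
  | smulAdd : ∀ a u v, Step (.smul a (.add u v)) (.add (.smul a u) (.smul a v))
  -- Group F
  | factor : ∀ a b u, Step (.add (.smul a u) (.smul b u)) (.smul (a+b) u)
  | factorOne : ∀ a u, Step (.add (.smul a u) u) (.smul (a+1) u)
  | factorBare : ∀ u, Step (.add u u) (.smul 2 u)
  -- Group A
  | appAddL : ∀ u v w, Step (.app (.add u v) w) (.add (.app u w) (.app v w))
  | appAddR : ∀ u v w, Step (.app w (.add u v)) (.add (.app w u) (.app w v))
  | appSmulL : ∀ a u v, Step (.app (.smul a u) v) (.smul a (.app u v))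
  | appSmulR : ∀ a u v, Step (.app v (.smul a u)) (.smul a (.app v u))
  | appZeroL : ∀ u, Step (.app .zero u) .zero
  | appZeroR : ∀ u, Step (.app u .zero) .zero
  -- β-reduction
  | beta : ∀ U t b, IsBasis b → Step (.app (.lam U t) b) (Tm.subst 0 b t)
  | tbeta : ∀ t U, Step (.tapp (.tlam t) U) (Tm.tsubst 0 U t)
  -- contextual congruence
  | addL : ∀ {t t'} (r), Step t t' → Step (.add t r) (.add t' r)
  | smulC : ∀ {t t'} (a : ℝ≥0), Step t t' → Step (.smul a t) (.smul a t')
  | appL : ∀ {t t'} (r), Step t t' → Step (.app t r) (.app t' r)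
  | appR : ∀ {r r'} (t), Step r r' → Step (.app t r) (.app t r')
  | tappC : ∀ {t t'} (U), Step t t' → Step (.tapp t U) (.tapp t' U)
  | lamC : ∀ {t t'} (U), Step t t' → Step (.lam U t) (.lam U t')
  | tlamC : ∀ {t t'}, Step t t' → Step (.tlam t) (.tlam t')

/-- One-step reduction, modulo AC of `+`. -/
def Red (t s : Tm) : Prop := ∃ t' s', ACEq t t' ∧ Step t' s' ∧ ACEq s' s

def RedStar : Tm → Tm → Prop := Relation.ReflTransGen Red

/-- Strong normalisation: no infinite reduction sequence starts from `t`. -/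
def SN (t : Tm) : Prop := Acc (fun a b => Red b a) t

/-! ## Values, neutral terms, reducibility candidates -/

def Tm.ClosedAt : ℕ → Tm → Prop
  | k, .var n => n < k
  | k, .lam _ t => Tm.ClosedAt (k+1) t
  | k, .tlam t => Tm.ClosedAt k t
  | k, .app t r => Tm.ClosedAt k t ∧ Tm.ClosedAt k r
  | k, .tapp t _ => Tm.ClosedAt k t
  | _, .zero => True
  | k, .smul _ t => Tm.ClosedAt k t
  | k, .add t r => Tm.ClosedAt k t ∧ Tm.ClosedAt k r

def Tm.Closed (t : Tm) : Prop := Tm.ClosedAt 0 t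

/-- The value grammar `v ::= λx:U.t | ΛX.t | v + v | α.v`. -/
inductive ValShape : Tm → Prop
  | lam : ∀ U t, ValShape (.lam U t)
  | tlam : ∀ t, ValShape (.tlam t)
  | add : ∀ {v w}, ValShape v → ValShape w → ValShape (.add v w)
  | smul : ∀ (a : ℝ≥0) {v}, ValShape v → ValShape (.smul a v)

def IsValue (t : Tm) : Prop := t.Closed ∧ ValShape t

/-- Neutral terms: closed terms that are not values. -/
def Neutral (t : Tm) : Prop := t.Closed ∧ ¬ ValShape t

/-- Strongly normalising closed terms. -/
def SN0 : Set Tm := {t | t.Closed ∧ SN t}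

/-- Reducibility candidates. -/
structure IsCand (A : Set Tm) : Prop where
  cr1 : A ⊆ SN0
  cr2 : ∀ ⦃t⦄, t ∈ A → ∀ ⦃t'⦄, RedStar t t' → t' ∈ A
  cr3 : ∀ ⦃t⦄, Neutral t → (∀ t', Red t t' → t' ∈ A) → t ∈ A

/-- Closure of `∅` under (CR3). -/
inductive EmptyClP : Tm → Prop
  | neu : ∀ {t}, Neutral t → (∀ t', Red t t' → EmptyClP t') → EmptyClP t

def EmptyCl : Set Tm := {t | EmptyClP t}

/-- `A ⊕ B`: closure of `{α.t + β.r | t ∈ A, r ∈ B}` under (CR2) and (CR3). -/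
inductive OplusClP (A B : Set Tm) : Tm → Prop
  | base : ∀ (a b : ℝ≥0) {t r}, t ∈ A → r ∈ B → OplusClP A B (.add (.smul a t) (.smul b r))
  | red : ∀ {t t'}, OplusClP A B t → RedStar t t' → OplusClP A B t'
  | neu : ∀ {t}, Neutral t → (∀ t', Red t t' → OplusClP A B t') → OplusClP A B t

def OplusCl (A B : Set Tm) : Set Tm := {t | OplusClP A B t}

/-- `A → B`: closure under (CR3) of `{t | ∀ basis b ∈ A, t b ∈ B}`. -/
inductive ArrowClP (A B : Set Tm) : Tm → Prop
  | base : ∀ {t}, (∀ b, IsBasis b → b ∈ A → Tm.app t b ∈ B) → ArrowClP A B t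
  | neu : ∀ {t}, Neutral t → (∀ t', Red t t' → ArrowClP A B t') → ArrowClP A B t

def ArrowCl (A B : Set Tm) : Set Tm := {t | ArrowClP A B t}

/-- `Λ A = {t | ∀ V, t@V ∈ A}`. -/
def LamSet (A : Set Tm) : Set Tm := {t | ∀ V : UTy, Tm.tapp t V ∈ A}

def extRho (S : Set Tm) (ρ : ℕ → Set Tm) : ℕ → Set Tm
  | 0 => S
  | n+1 => ρ n

/- The reducibility model `⟦·⟧_ρ`. -/
mutual
def interpU (ρ : ℕ → Set Tm) : UTy → Set Tm
  | .var n => ρ n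
  | .arrow U T => ArrowCl (interpU ρ U) (interpT ρ T)
  | .all U => ⋂ S ∈ {S : Set Tm | IsCand S}, LamSet (interpU (extRho S ρ) U)
termination_by t => sizeOf t
def interpT (ρ : ℕ → Set Tm) : Ty → Set Tm
  | .u U => interpU ρ U
  | .add T R => OplusCl (interpT ρ T) (interpT ρ R)
  | .zero => EmptyCl
termination_by t => sizeOf t
end

/-! ## Parallel substitutions (for the adequacy statement) -/

def liftTySub (δ : ℕ → UTy) : ℕ → UTy
  | 0 => .var 0
  | n+1 => (δ n).shift 1 0

mutual
def UTy.substPar (δ : ℕ → UTy) : UTy → UTy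
  | .var n => δ n
  | .arrow U T => .arrow (U.substPar δ) (T.substPar δ)
  | .all U => .all (U.substPar (liftTySub δ))
termination_by t => sizeOf t
def Ty.substPar (δ : ℕ → UTy) : Ty → Ty
  | .u U => .u (U.substPar δ)
  | .add T R => .add (T.substPar δ) (R.substPar δ)
  | .zero => .zero
termination_by t => sizeOf t
end

def Tm.tsubstPar (δ : ℕ → UTy) : Tm → Tm
  | .var n => .var n
  | .lam U t => .lam (U.substPar δ) (Tm.tsubstPar δ t)
  | .tlam t => .tlam (Tm.tsubstPar (liftTySub δ) t)
  | .app t r => .app (Tm.tsubstPar δ t) (Tm.tsubstPar δ r)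
  | .tapp t U => .tapp (Tm.tsubstPar δ t) (U.substPar δ)
  | .zero => .zero
  | .smul a t => .smul a (Tm.tsubstPar δ t)
  | .add t r => .add (Tm.tsubstPar δ t) (Tm.tsubstPar δ r)

def liftTmSub (σ : ℕ → Tm) : ℕ → Tm
  | 0 => .var 0
  | n+1 => (σ n).shift 1 0

def Tm.substPar (σ : ℕ → Tm) : Tm → Tm
  | .var n => σ n
  | .lam U t => .lam U (Tm.substPar (liftTmSub σ) t)
  | .tlam t => .tlam (Tm.substPar (fun n => (σ n).tshift 1 0) t)
  | .app t r => .app (Tm.substPar σ t) (Tm.substPar σ r)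
  | .tapp t U => .tapp (Tm.substPar σ t) U
  | .zero => .zero
  | .smul a t => .smul a (Tm.substPar σ t)
  | .add t r => .add (Tm.substPar σ t) (Tm.substPar σ r)

/-! ## The Additive calculus -/

inductive ATm : Type
  | var : ℕ → ATm
  | lam : UTy → ATm → ATm
  | tlam : ATm → ATm
  | app : ATm → ATm → ATm
  | tapp : ATm → UTy → ATm
  | zero : ATm
  | add : ATm → ATm → ATm

/-- `nA n t` is the `n`-fold sum `t + ⋯ + t`, with `nA 0 t = 0`. -/
def nA : ℕ → ATm → ATm
  | 0, _ => .zero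
  | 1, t => t
  | n+2, t => .add t (nA (n+1) t)

/-- The relation `⊑` on Additive terms. -/
inductive ASub : ATm → ATm → Prop
  | sum : ∀ {m n : ℕ} (t : ATm), m ≤ n → ASub (nA m t) (nA n t)
  | lam : ∀ {t t'} (U : UTy), ASub t t' → ASub (.lam U t) (.lam U t')
  | tlam : ∀ {t t'}, ASub t t' → ASub (.tlam t) (.tlam t')
  | tapp : ∀ {t t'} (U : UTy), ASub t t' → ASub (.tapp t U) (.tapp t' U)
  | app : ∀ {t t' r r'}, ASub t t' → ASub r r' → ASub (.app t r) (.app t' r')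
  | add : ∀ {t t' r r'}, ASub t t' → ASub r r' → ASub (.add t r) (.add t' r')
  | trans : ∀ {t r s}, ASub t r → ASub r s → ASub t s

/-- Typing rules of the Additive calculus: those of λCA without `sI`. -/
inductive AHasTy : Ctx → ATm → Ty → Prop
  | var : ∀ {Γ : Ctx} {n U}, Γ[n]? = some U → AHasTy Γ (.var n) (.u U)
  | zero : ∀ {Γ}, AHasTy Γ .zero .zero
  | lam : ∀ {Γ U t T}, AHasTy (U :: Γ) t T → AHasTy Γ (.lam U t) (.u (.arrow U T))
  | app : ∀ {Γ t r U} {β : ℕ} {Ts : List Ty},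
      AHasTy Γ t (sumTy (Ts.map fun Ti => .u (.arrow U Ti))) →
      AHasTy Γ r (nTy β (.u U)) →
      AHasTy Γ (.app t r) (sumTy (Ts.map fun Ti => nTy β Ti))
  | tlam : ∀ {Γ t U}, AHasTy (Γ.map (UTy.shift 1 0)) t (.u U) →
      AHasTy Γ (.tlam t) (.u (.all U))
  | tapp : ∀ {Γ t U V}, AHasTy Γ t (.u (.all U)) →
      AHasTy Γ (.tapp t V) (.u (UTy.subst 0 V U))
  | addI : ∀ {Γ t r T R}, AHasTy Γ t T → AHasTy Γ r R → AHasTy Γ (.add t r) (.add T R)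
  | eq : ∀ {Γ t T R}, AHasTy Γ t T → TyEq T R → AHasTy Γ t R

/-- The abstraction function `σ : λCA → Additive`. -/
noncomputable def absTm : Tm → ATm
  | .var n => .var n
  | .lam U t => .lam U (absTm t)
  | .tlam t => .tlam (absTm t)
  | .app t r => .app (absTm t) (absTm r)
  | .tapp t U => .tapp (absTm t) U
  | .zero => .zero
  | .smul a t => nA ⌊a⌋₊ (absTm t)
  | .add t r => .add (absTm t) (absTm r)

end LCA

/-! ## System F with pairs -/

namespace Fp

inductive FTm : Type
  | var : ℕ → FTm
  | lam : FTm → FTm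
  | app : FTm → FTm → FTm
  | star : FTm
  | pair : FTm → FTm → FTm
  | p1 : FTm → FTm
  | p2 : FTm → FTm

/-- The relation `⊑_F` on terms of System F with pairs. -/
inductive FSub : FTm → FTm → Prop
  | star : ∀ t, FSub .star t
  | refl : ∀ t, FSub t t
  | dup : ∀ t, FSub t (.pair t t)
  | pair : ∀ {t t' r r'}, FSub t t' → FSub r r' → FSub (.pair t r) (.pair t' r')
  | app : ∀ {t t' r r'}, FSub t t' → FSub r r' → FSub (.app t r) (.app t' r')
  | lam : ∀ {t t'}, FSub t t' → FSub (.lam t) (.lam t')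
  | p1 : ∀ {t t'}, FSub t t' → FSub (.p1 t) (.p1 t')
  | p2 : ∀ {t t'}, FSub t t' → FSub (.p2 t) (.p2 t')
  | trans : ∀ {t r s}, FSub t r → FSub r s → FSub t s

end Fp

/-! ## Natural operations on ordinals (local port of the former Mathlib file) -/

universe u

/-- A type synonym for ordinals with natural addition. -/
def NatOrdinal : Type (u + 1) := Ordinal.{u}

noncomputable instance : LinearOrder NatOrdinal.{u} := inferInstanceAs (LinearOrder Ordinal.{u})
instance : Zero NatOrdinal.{u} := inferInstanceAs (Zero Ordinal.{u})
instance : One NatOrdinal.{u} := inferInstanceAs (One Ordinal.{u})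
instance : OrderBot NatOrdinal.{u} := inferInstanceAs (OrderBot Ordinal.{u})
noncomputable instance : SuccOrder NatOrdinal.{u} := inferInstanceAs (SuccOrder Ordinal.{u})
instance : ZeroLEOneClass NatOrdinal.{u} := inferInstanceAs (ZeroLEOneClass Ordinal.{u})
instance : NeZero (1 : NatOrdinal.{u}) := inferInstanceAs (NeZero (1 : Ordinal.{u}))
instance : WellFoundedLT NatOrdinal.{u} := inferInstanceAs (WellFoundedLT Ordinal.{u})

/-- The identity map from ordinals to `NatOrdinal`. -/
noncomputable def Ordinal.toNatOrdinal : Ordinal.{u} ≃o NatOrdinal.{u} := OrderIso.refl _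

/-- The identity map from `NatOrdinal` to ordinals. -/
noncomputable def NatOrdinal.toOrdinal : NatOrdinal.{u} ≃o Ordinal.{u} := OrderIso.refl _

theorem Ordinal.toNatOrdinal_zero : Ordinal.toNatOrdinal (0 : Ordinal.{u}) = 0 := rfl

theorem Ordinal.toNatOrdinal_one : Ordinal.toNatOrdinal (1 : Ordinal.{u}) = 1 := rfl

theorem NatOrdinal.induction {p : NatOrdinal.{u} → Prop} :
    ∀ (i) (_ : ∀ j, (∀ k, k < j → p k) → p j), p i :=
  Ordinal.induction

namespace Ordinal

/-- Natural addition of ordinals. -/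
noncomputable def nadd : Ordinal.{u} → Ordinal.{u} → Ordinal.{u}
  | a, b =>
    max (blsub.{u, u} a fun a' _ => nadd a' b) (blsub.{u, u} b fun b' _ => nadd a b')
termination_by a b => (a, b)

end Ordinal

namespace NaturalOps

infixl:65 " ♯ " => Ordinal.nadd

end NaturalOps

namespace Ordinal

open NaturalOps

theorem nadd_def (a b : Ordinal.{u}) :
    a ♯ b = max (blsub.{u, u} a fun a' _ => a' ♯ b) (blsub.{u, u} b fun b' _ => a ♯ b') := by
  rw [nadd]

theorem nadd_le_iff {a b c : Ordinal.{u}} :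
    a ♯ b ≤ c ↔ (∀ a' < a, a' ♯ b < c) ∧ ∀ b' < b, a ♯ b' < c := by
  rw [nadd_def]; simp [blsub_le_iff]

theorem lt_nadd_iff {a b c : Ordinal.{u}} :
    c < a ♯ b ↔ (∃ a' < a, c ≤ a' ♯ b) ∨ ∃ b' < b, c ≤ a ♯ b' := by
  rw [← not_le, nadd_le_iff]
  simp only [not_and_or, not_forall, not_lt, exists_prop]

theorem nadd_lt_nadd_left {b c : Ordinal.{u}} (h : b < c) (a : Ordinal.{u}) : a ♯ b < a ♯ c :=
  lt_nadd_iff.2 (Or.inr ⟨b, h, le_rfl⟩)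

theorem nadd_lt_nadd_right {b c : Ordinal.{u}} (h : b < c) (a : Ordinal.{u}) : b ♯ a < c ♯ a :=
  lt_nadd_iff.2 (Or.inl ⟨b, h, le_rfl⟩)

theorem nadd_le_nadd_left {b c : Ordinal.{u}} (h : b ≤ c) (a : Ordinal.{u}) : a ♯ b ≤ a ♯ c := by
  rcases h.lt_or_eq with h | rfl
  · exact (nadd_lt_nadd_left h a).le
  · exact le_rfl

theorem nadd_le_nadd_right {b c : Ordinal.{u}} (h : b ≤ c) (a : Ordinal.{u}) : b ♯ a ≤ c ♯ a := by
  rcases h.lt_or_eq with h | rfl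
  · exact (nadd_lt_nadd_right h a).le
  · exact le_rfl

theorem nadd_comm (a b : Ordinal.{u}) : a ♯ b = b ♯ a := by
  induction a using Ordinal.induction generalizing b with
  | h a IHa =>
    induction b using Ordinal.induction with
    | h b IHb =>
      rw [nadd_def, nadd_def b a, max_comm]
      congr 1 <;> congr 1 <;> funext x hx
      · exact IHb x hx
      · exact IHa x hx b

theorem nadd_zero (a : Ordinal.{u}) : a ♯ 0 = a := by
  induction a using Ordinal.induction with
  | h a IH =>
    apply le_antisymm
    · rw [nadd_le_iff]
      refine ⟨fun a' ha' => by rwa [IH a' ha'], fun b' hb' => absurd hb' (not_lt_zero)⟩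
    · by_contra! h
      have h2 := nadd_lt_nadd_right h 0
      rw [IH _ h] at h2
      exact lt_irrefl _ h2

theorem zero_nadd (a : Ordinal.{u}) : 0 ♯ a = a := by rw [nadd_comm, nadd_zero]

theorem nadd_assoc (a b c : Ordinal.{u}) : a ♯ b ♯ c = a ♯ (b ♯ c) := by
  induction a using Ordinal.induction generalizing b c with
  | h a IHa =>
  induction b using Ordinal.induction generalizing c with
  | h b IHb =>
  induction c using Ordinal.induction with
  | h c IHc =>
  apply le_antisymm
  · rw [nadd_le_iff]
    refine ⟨fun x hx => ?_, fun c' hc' => ?_⟩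
    · rcases lt_nadd_iff.1 hx with ⟨a', ha', h'⟩ | ⟨b', hb', h'⟩
      · refine (nadd_le_nadd_right h' c).trans_lt ?_
        rw [IHa a' ha']
        exact nadd_lt_nadd_right ha' _
      · refine (nadd_le_nadd_right h' c).trans_lt ?_
        rw [IHb b' hb']
        exact nadd_lt_nadd_left (nadd_lt_nadd_right hb' _) _
    · rw [IHc c' hc']
      exact nadd_lt_nadd_left (nadd_lt_nadd_left hc' _) _
  · rw [nadd_le_iff]
    refine ⟨fun a' ha' => ?_, fun x hx => ?_⟩
    · rw [← IHa a' ha']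
      exact nadd_lt_nadd_right (nadd_lt_nadd_right ha' _) _
    · rcases lt_nadd_iff.1 hx with ⟨b', hb', h'⟩ | ⟨c', hc', h'⟩
      · refine (nadd_le_nadd_left h' a).trans_lt ?_
        rw [← IHb b' hb']
        exact nadd_lt_nadd_right (nadd_lt_nadd_left hb' _) _
      · refine (nadd_le_nadd_left h' a).trans_lt ?_
        rw [← IHc c' hc']
        exact nadd_lt_nadd_left hc' _

end Ordinal

namespace NatOrdinal

open Ordinal NaturalOps

noncomputable instance : Add NatOrdinal.{u} := ⟨Ordinal.nadd⟩

noncomputable instance : AddCommMonoid NatOrdinal.{u} where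
  add_assoc := Ordinal.nadd_assoc
  zero_add := Ordinal.zero_nadd
  add_zero := Ordinal.nadd_zero
  add_comm := Ordinal.nadd_comm
  nsmul := nsmulRec

instance : AddLeftStrictMono NatOrdinal.{u} :=
  ⟨fun a _ _ h => Ordinal.nadd_lt_nadd_left h a⟩

instance : AddRightStrictMono NatOrdinal.{u} :=
  ⟨fun a _ _ h => Ordinal.nadd_lt_nadd_right h a⟩

instance : AddLeftMono NatOrdinal.{u} :=
  ⟨fun a _ _ h => Ordinal.nadd_le_nadd_left h a⟩

instance : AddRightMono NatOrdinal.{u} :=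
  ⟨fun a _ _ h => Ordinal.nadd_le_nadd_right h a⟩

end NatOrdinal

/-! ## Auxiliary development for Statement 12 -/

namespace LCA

open Ordinal NaturalOps in
/-- Natural addition of two ordinals below `ω ^ c` stays below `ω ^ c`. -/
theorem nadd_lt_omega0_opow : ∀ (c : Ordinal), ∀ a < ω ^ c, ∀ b < ω ^ c, a ♯ b < ω ^ c := by
  intro c
  induction c using Ordinal.limitRecOn with
  | zero =>
    intro a ha b hb
    rw [opow_zero, Ordinal.lt_one_iff_zero] at ha hb
    subst ha; subst hb
    rw [opow_zero, nadd_zero, Ordinal.lt_one_iff_zero]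
  | add_one d IH =>
    intro a ha b hb
    rw [opow_add_one] at ha hb ⊢
    set W := ω ^ d with hW
    have hW0 : W ≠ 0 := opow_ne_zero d omega0_ne_zero
    have hWpos : 0 < W := opow_pos d omega0_pos
    have hmod : ∀ x : Ordinal, x % W < W := fun x => mod_lt x hW0
    have hdiv : ∀ x : Ordinal, x < W * ω → x / W < ω := fun x hx => (div_lt hW0).2 hx
    -- main bound, by nested transfinite induction
    have bound : ∀ a, a < W * ω → ∀ b, b < W * ω →
        a ♯ b ≤ W * (a / W + b / W) + (a % W ♯ b % W) := by
      intro a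
      induction a using Ordinal.induction with
      | h a IHa =>
        intro ha b
        induction b using Ordinal.induction with
        | h b IHb =>
          intro hb
          rw [nadd_le_iff]
          constructor
          · intro a' ha'
            have ha'W : a' < W * ω := ha'.trans ha
            have H := IHa a' ha' ha'W b hb
            refine H.trans_lt ?_
            have hq : a' / W ≤ a / W := div_le_left ha'.le W
            rcases lt_or_eq_of_le hq with h | h
            · have step1 : W * (a' / W + b / W) + (a' % W ♯ b % W)
                  < W * (a' / W + b / W) + W :=
                add_lt_add_right (IH _ (hmod a') _ (hmod b)) _
              refine step1.trans_le ?_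
              have e : W * (a' / W + b / W) + W = W * (a' / W + b / W + 1) := by
                rw [Ordinal.add_one_eq_succ, Ordinal.mul_succ]
              rw [e]
              refine le_trans (le_trans (mul_le_mul_right ?_ W) le_self_add) le_rfl
              -- a'/W + b/W + 1 ≤ a/W + b/W, all quantities finite
              obtain ⟨m', hm'⟩ := Ordinal.lt_omega0.1 (hdiv a' ha'W)
              obtain ⟨m, hm⟩ := Ordinal.lt_omega0.1 (hdiv a ha)
              obtain ⟨n, hn⟩ := Ordinal.lt_omega0.1 (hdiv b hb)
              have hmm : m' < m := by rwa [hm', hm, Nat.cast_lt] at h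
              rw [hm', hm, hn]
              exact_mod_cast Nat.succ_le_of_lt (show m' + n < m + n by omega)
            · -- equal quotients: compare remainders
              have hrem : a' % W < a % W := by
                have e1 := div_add_mod a' W
                have e2 := div_add_mod a W
                have := ha'
                rw [← e1, ← e2, h] at this
                exact (add_lt_add_iff_left _).1 this
              rw [h]
              exact add_lt_add_right (nadd_lt_nadd_right hrem _) _
          · intro b' hb'
            have hb'W : b' < W * ω := hb'.trans hb
            have H := IHb b' hb' hb'W
            refine H.trans_lt ?_
            have hq : b' / W ≤ b / W := div_le_left hb'.le W
            rcases lt_or_eq_of_le hq with h | h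
            · have step1 : W * (a / W + b' / W) + (a % W ♯ b' % W)
                  < W * (a / W + b' / W) + W :=
                add_lt_add_right (IH _ (hmod a) _ (hmod b')) _
              refine step1.trans_le ?_
              have e : W * (a / W + b' / W) + W = W * (a / W + b' / W + 1) := by
                rw [Ordinal.add_one_eq_succ, Ordinal.mul_succ]
              rw [e]
              refine le_trans (le_trans (mul_le_mul_right ?_ W) le_self_add) le_rfl
              obtain ⟨n', hn'⟩ := Ordinal.lt_omega0.1 (hdiv b' hb'W)
              obtain ⟨m, hm⟩ := Ordinal.lt_omega0.1 (hdiv a ha)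
              obtain ⟨n, hn⟩ := Ordinal.lt_omega0.1 (hdiv b hb)
              have hnn : n' < n := by rwa [hn', hn, Nat.cast_lt] at h
              rw [hn', hm, hn]
              exact_mod_cast Nat.succ_le_of_lt (show m + n' < m + n by omega)
            · have hrem : b' % W < b % W := by
                have e1 := div_add_mod b' W
                have e2 := div_add_mod b W
                have := hb'
                rw [← e1, ← e2, h] at this
                exact (add_lt_add_iff_left _).1 this
              rw [h]
              exact add_lt_add_right (nadd_lt_nadd_left hrem _) _
    have H := bound a ha b hb
    refine H.trans_lt ?_
    have step1 : W * (a / W + b / W) + (a % W ♯ b % W) < W * (a / W + b / W) + W :=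
      add_lt_add_right (IH _ (hmod a) _ (hmod b)) _
    refine step1.trans_le ?_
    have e : W * (a / W + b / W) + W = W * (a / W + b / W + 1) := by
      rw [Ordinal.add_one_eq_succ, Ordinal.mul_succ]
    rw [e]
    refine le_of_lt ((mul_lt_mul_iff_right₀ hWpos).2 ?_)
    obtain ⟨m, hm⟩ := Ordinal.lt_omega0.1 (hdiv a ha)
    obtain ⟨n, hn⟩ := Ordinal.lt_omega0.1 (hdiv b hb)
    rw [hm, hn]
    exact_mod_cast nat_lt_omega0 (m + n + 1)
  | limit c hc IH =>
    intro a ha b hb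
    rw [lt_opow_of_isSuccLimit omega0_ne_zero hc] at ha hb
    obtain ⟨c₁, hc₁, ha⟩ := ha
    obtain ⟨c₂, hc₂, hb⟩ := hb
    have hmax : max c₁ c₂ < c := max_lt hc₁ hc₂
    have ha' : a < ω ^ max c₁ c₂ :=
      ha.trans_le (opow_le_opow_right omega0_pos (le_max_left _ _))
    have hb' : b < ω ^ max c₁ c₂ :=
      hb.trans_le (opow_le_opow_right omega0_pos (le_max_right _ _))
    exact (IH _ hmax a ha' b hb').trans_le
      (opow_le_opow_right omega0_pos hmax.le)

/-! ### Basic facts about `Red` and `SN` -/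

lemma red_of_step {t s : Tm} (h : Step t s) : Red t s :=
  ⟨t, s, .refl t, h, .refl s⟩

lemma red_of_aceq {t t' s : Tm} (h : ACEq t t') (hr : Red t' s) : Red t s := by
  obtain ⟨t₁, s₁, h1, h2, h3⟩ := hr
  exact ⟨t₁, s₁, h.trans h1, h2, h3⟩

lemma red_aceq_right {t s s' : Tm} (hr : Red t s) (h : ACEq s s') : Red t s' := by
  obtain ⟨t₁, s₁, h1, h2, h3⟩ := hr
  exact ⟨t₁, s₁, h1, h2, h3.trans h⟩

lemma sn_aceq {t t' : Tm} (h : ACEq t t') (ht : SN t) : SN t' :=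
  Acc.intro t' fun s hs => ht.inv (red_of_aceq h hs)

lemma red_add_left (r : Tm) {t t' : Tm} (h : Red t t') :
    Red (.add t r) (.add t' r) := by
  obtain ⟨t₁, s₁, h1, h2, h3⟩ := h
  exact ⟨.add t₁ r, .add s₁ r, .addCong h1 (.refl r), .addL r h2, .addCong h3 (.refl r)⟩

lemma red_add_right (t : Tm) {r r' : Tm} (h : Red r r') :
    Red (.add t r) (.add t r') := by
  obtain ⟨r₁, s₁, h1, h2, h3⟩ := h
  exact ⟨.add r₁ t, .add s₁ t,
    (ACEq.comm t r).trans (.addCong h1 (.refl t)), .addL t h2,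
    (ACEq.addCong h3 (.refl t)).trans (ACEq.comm _ t)⟩

lemma red_smul (a : ℝ≥0) {t t' : Tm} (h : Red t t') :
    Red (.smul a t) (.smul a t') := by
  obtain ⟨t₁, s₁, h1, h2, h3⟩ := h
  exact ⟨.smul a t₁, .smul a s₁, .smulCong a h1, .smulC a h2, .smulCong a h3⟩

lemma sn_of_image {g : Tm → Tm} (hg : ∀ x y, Red x y → Red (g x) (g y))
    {t : Tm} (h : SN (g t)) : SN t := by
  have key : ∀ u, SN u → ∀ t, u = g t → SN t := by
    intro u hu
    induction hu with
    | intro x hx ih =>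
      rintro t rfl
      exact Acc.intro t fun s hs => ih (g s) (hg t s hs) s rfl
  exact key _ h t rfl

lemma sn_add_left {t r : Tm} (h : SN (.add t r)) : SN t :=
  sn_of_image (fun _ _ hh => red_add_left r hh) h

lemma sn_add_right {t r : Tm} (h : SN (.add t r)) : SN r :=
  sn_of_image (fun _ _ hh => red_add_right t hh) h

lemma sn_smul_inv {a : ℝ≥0} {t : Tm} (h : SN (.smul a t)) : SN t :=
  sn_of_image (fun _ _ hh => red_smul a hh) h

/-! ### Rank of strongly normalising terms -/

/-- `RedS s t` : `t` is strongly normalising and reduces in one step to `s`. -/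
def RedS (s t : Tm) : Prop := SN t ∧ Red t s

lemma acc_redS (t : Tm) : Acc RedS t := by
  by_cases h : SN t
  · induction h with
    | intro x hx ih => exact Acc.intro x fun b hb => ih b hb.2
  · exact Acc.intro t fun b hb => absurd hb.1 h

/-- Ordinal rank of a term (meaningful only on strongly normalising terms). -/
noncomputable def rank (t : Tm) : Ordinal := (acc_redS t).rank

lemma rank_eq' (t : Tm) :
    rank t = ⨆ b : {b // RedS b t}, Order.succ (rank b.1) := by
  rw [rank, Acc.rank_eq]; rfl

lemma rank_lt' {b t : Tm} (h : RedS b t) : rank b < rank t :=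
  Acc.rank_lt_of_rel (acc_redS t) h

lemma rank_le_of_preds {t t' : Tm} (h : ∀ b, RedS b t → RedS b t') :
    rank t ≤ rank t' := by
  rw [rank_eq' t]
  exact ciSup_le' fun ⟨b, hb⟩ => Order.succ_le_of_lt (rank_lt' (h b hb))

lemma rank_aceq {t t' : Tm} (h : ACEq t t') : rank t = rank t' :=
  le_antisymm
    (rank_le_of_preds fun b hb => ⟨sn_aceq h hb.1, red_of_aceq h.symm hb.2⟩)
    (rank_le_of_preds fun b hb => ⟨sn_aceq h.symm hb.1, red_of_aceq h hb.2⟩)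

lemma rank_le_of_sim {g : Tm → Tm} (hg : ∀ x y, Red x y → Red (g x) (g y)) :
    ∀ t, SN (g t) → rank t ≤ rank (g t) := by
  have key : ∀ t, SN t → SN (g t) → rank t ≤ rank (g t) := by
    intro t ht
    induction ht with
    | intro x hx ih =>
      intro hgx
      rw [rank_eq' x]
      refine ciSup_le' ?_
      rintro ⟨b, hsn, hred⟩
      have hgb : Red (g x) (g b) := hg _ _ hred
      have h1 : rank b ≤ rank (g b) := ih b hred (hgx.inv hgb)
      have h2 : rank (g b) < rank (g x) := rank_lt' ⟨hgx, hgb⟩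
      exact Order.succ_le_of_lt (h1.trans_lt h2)
  exact fun t hgt => key t (sn_of_image hg hgt) hgt

/-! ### Algebraic structure of terms -/

/-- Base terms: head is not an algebraic constructor. -/
def IsBase : Tm → Prop
  | .add _ _ => False
  | .smul _ _ => False
  | .zero => False
  | _ => True

/-- Alg-subterms: subterms reachable through `add`/`smul` nodes only. -/
inductive AlgSub : Tm → Tm → Prop
  | refl (t) : AlgSub t t
  | addl {b t} (r) : AlgSub b t → AlgSub b (.add t r)
  | addr {b r} (t) : AlgSub b r → AlgSub b (.add t r)
  | smul {b t} (a : ℝ≥0) : AlgSub b t → AlgSub b (.smul a t)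

lemma rank_le_alg {b q : Tm} (h : AlgSub b q) (hq : SN q) : rank b ≤ rank q := by
  induction h with
  | refl => exact le_rfl
  | addl r h ih =>
    exact (ih (sn_add_left hq)).trans
      (rank_le_of_sim (fun _ _ hh => red_add_left r hh) _ hq)
  | addr t h ih =>
    exact (ih (sn_add_right hq)).trans
      (rank_le_of_sim (fun _ _ hh => red_add_right t hh) _ hq)
  | smul a h ih =>
    exact (ih (sn_smul_inv hq)).trans
      (rank_le_of_sim (fun _ _ hh => red_smul a hh) _ hq)

/-- All base alg-subterms of `t` are strongly normalising. -/
def AlgSN : Tm → Prop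
  | .add t r => AlgSN t ∧ AlgSN r
  | .smul _ t => AlgSN t
  | .zero => True
  | t => SN t

lemma sn_algSN : ∀ {t : Tm}, SN t → AlgSN t := by
  intro t
  induction t with
  | add t r iht ihr => exact fun h => ⟨iht (sn_add_left h), ihr (sn_add_right h)⟩
  | smul a t iht => exact fun h => iht (sn_smul_inv h)
  | zero => exact fun _ => trivial
  | var n => exact fun h => h
  | lam U t _ => exact fun h => h
  | tlam t _ => exact fun h => h
  | app t r _ _ => exact fun h => h
  | tapp t U _ => exact fun h => h

lemma algSN_aceq {t t' : Tm} (h : ACEq t t') : AlgSN t ↔ AlgSN t' := by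
  induction h with
  | refl t => exact Iff.rfl
  | symm _ ih => exact ih.symm
  | trans _ _ ih1 ih2 => exact ih1.trans ih2
  | comm t r => exact and_comm
  | assoc t r s => exact (and_assoc).symm
  | addCong _ _ ih1 ih2 => exact and_congr ih1 ih2
  | smulCong a _ ih => exact ih
  | appCong h1 h2 _ _ =>
    exact ⟨sn_aceq (ACEq.appCong h1 h2), sn_aceq (ACEq.appCong h1 h2).symm⟩
  | tappCong U h1 _ =>
    exact ⟨sn_aceq (ACEq.tappCong U h1), sn_aceq (ACEq.tappCong U h1).symm⟩
  | lamCong U h1 _ =>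
    exact ⟨sn_aceq (ACEq.lamCong U h1), sn_aceq (ACEq.lamCong U h1).symm⟩
  | tlamCong h1 _ =>
    exact ⟨sn_aceq (ACEq.tlamCong h1), sn_aceq (ACEq.tlamCong h1).symm⟩

/-! ### The ordinal measure -/

open Ordinal in
/-- Measure of a base term. -/
noncomputable def obase (t : Tm) : NatOrdinal := Ordinal.toNatOrdinal (ω ^ (rank t + 1))

/-- The algebraic measure of a term. -/
noncomputable def O : Tm → NatOrdinal
  | .add t r => O t + O r + 1
  | .smul _ t => O t + O t
  | .zero => 1
  | t => obase t

lemma O_base {t : Tm} (h : IsBase t) : O t = obase t := by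
  cases t <;> first | rfl | exact absurd h (by simp [IsBase])

open Ordinal in
lemma obase_pos (t : Tm) : 0 < obase t := by
  rw [obase, ← Ordinal.toNatOrdinal_zero]
  exact (Ordinal.toNatOrdinal).lt_iff_lt.2 (opow_pos _ omega0_pos)

lemma lt_self_add {x y : NatOrdinal} (hy : 0 < y) : x < x + y := by
  simpa using add_lt_add_right hy x

lemma natOrd_self_le_add {x y : NatOrdinal} : x ≤ x + y := by
  have h0 : (0 : NatOrdinal) ≤ y := bot_le
  simpa using add_le_add_right h0 x

lemma add_lt_add_right' {a b : NatOrdinal} (h : a < b) (c : NatOrdinal) :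
    a + c < b + c := by
  rw [add_comm a c, add_comm b c]; exact add_lt_add_right h c

lemma O_pos : ∀ t : Tm, 0 < O t := by
  intro t
  induction t with
  | add t r iht ihr => exact lt_of_lt_of_le iht (by
      show O t ≤ O t + O r + 1
      exact natOrd_self_le_add.trans natOrd_self_le_add)
  | smul a t iht => exact lt_of_lt_of_le iht natOrd_self_le_add
  | zero => exact zero_lt_one
  | var n => exact obase_pos _
  | lam U t _ => exact obase_pos _
  | tlam t _ => exact obase_pos _
  | app t r _ _ => exact obase_pos _
  | tapp t U _ => exact obase_pos _

lemma one_le_O (t : Tm) : 1 ≤ O t := by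
  have h := Order.succ_le_of_lt (O_pos t)
  rwa [show Order.succ (0 : NatOrdinal) = 1 from Ordinal.succ_zero] at h

lemma O_aceq {t t' : Tm} (h : ACEq t t') : O t = O t' := by
  induction h with
  | refl t => rfl
  | symm _ ih => exact ih.symm
  | trans _ _ ih1 ih2 => exact ih1.trans ih2
  | comm t r => show O t + O r + 1 = O r + O t + 1; rw [add_comm (O t)]
  | assoc t r s =>
    show O t + (O r + O s + 1) + 1 = O t + O r + 1 + O s + 1
    abel
  | addCong _ _ ih1 ih2 => show O _ + O _ + 1 = O _ + O _ + 1; rw [ih1, ih2]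
  | smulCong a _ ih => show O _ + O _ = O _ + O _; rw [ih]
  | appCong h1 h2 _ _ =>
    show obase _ = obase _
    rw [obase, obase, rank_aceq (ACEq.appCong h1 h2)]
  | tappCong U h1 _ =>
    show obase _ = obase _
    rw [obase, obase, rank_aceq (ACEq.tappCong U h1)]
  | lamCong U h1 _ =>
    show obase _ = obase _
    rw [obase, obase, rank_aceq (ACEq.lamCong U h1)]
  | tlamCong h1 _ =>
    show obase _ = obase _
    rw [obase, obase, rank_aceq (ACEq.tlamCong h1)]

lemma lt_toNatOrdinal_iff {q : NatOrdinal} {z : Ordinal} :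
    q < Ordinal.toNatOrdinal z ↔ NatOrdinal.toOrdinal q < z := Iff.rfl

open Ordinal NaturalOps in
lemma natOrd_add_lt_opow {c : Ordinal} {x y : NatOrdinal}
    (hx : x < Ordinal.toNatOrdinal (ω ^ c)) (hy : y < Ordinal.toNatOrdinal (ω ^ c)) :
    x + y < Ordinal.toNatOrdinal (ω ^ c) := by
  have hx' : NatOrdinal.toOrdinal x < ω ^ c := lt_toNatOrdinal_iff.1 hx
  have hy' : NatOrdinal.toOrdinal y < ω ^ c := lt_toNatOrdinal_iff.1 hy
  exact lt_toNatOrdinal_iff.2 (nadd_lt_omega0_opow c _ hx' _ hy')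

open Ordinal in
lemma natOrd_one_lt_opow {c : Ordinal} (hc : 0 < c) :
    (1 : NatOrdinal) < Ordinal.toNatOrdinal (ω ^ c) := by
  rw [← Ordinal.toNatOrdinal_one]
  refine Ordinal.toNatOrdinal.lt_iff_lt.2 ?_
  calc (1 : Ordinal) < ω := one_lt_omega0
    _ = ω ^ (1 : Ordinal) := (opow_one ω).symm
    _ ≤ ω ^ c := opow_le_opow_right omega0_pos (Order.one_le_iff_pos.2 hc)

open Ordinal in
lemma O_lt_opow {c : Ordinal} (hc : 0 < c) :
    ∀ q : Tm, (∀ b, AlgSub b q → IsBase b → O b < Ordinal.toNatOrdinal (ω ^ c)) →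
      O q < Ordinal.toNatOrdinal (ω ^ c) := by
  intro q
  induction q with
  | add t r iht ihr =>
    intro h
    have h1 := iht fun b hb hbase => h b (AlgSub.addl r hb) hbase
    have h2 := ihr fun b hb hbase => h b (AlgSub.addr t hb) hbase
    exact natOrd_add_lt_opow (natOrd_add_lt_opow h1 h2) (natOrd_one_lt_opow hc)
  | smul a t iht =>
    intro h
    have h1 := iht fun b hb hbase => h b (AlgSub.smul a hb) hbase
    exact natOrd_add_lt_opow h1 h1
  | zero => intro _; exact natOrd_one_lt_opow hc
  | var n => intro h; exact h _ (AlgSub.refl _) trivial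
  | lam U t _ => intro h; exact h _ (AlgSub.refl _) trivial
  | tlam t _ => intro h; exact h _ (AlgSub.refl _) trivial
  | app t r _ _ => intro h; exact h _ (AlgSub.refl _) trivial
  | tapp t U _ => intro h; exact h _ (AlgSub.refl _) trivial

open Ordinal in
/-- Key step for base-headed terms: any reduct has smaller measure. -/
lemma step_base {p q : Tm} (hbase : IsBase p) (hsn : SN p) (hred : Red p q) :
    AlgSN q ∧ O q < O p := by
  have hq : SN q := hsn.inv hred
  refine ⟨sn_algSN hq, ?_⟩
  rw [O_base hbase, obase]
  refine O_lt_opow ?_ q ?_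
  · exact lt_of_le_of_lt zero_le (Order.lt_succ _) |>.trans_eq
      (Ordinal.add_one_eq_succ _).symm
  · intro b hb hbbase
    rw [O_base hbbase, obase]
    refine Ordinal.toNatOrdinal.lt_iff_lt.2 ?_
    refine (opow_lt_opow_iff_right one_lt_omega0).2 ?_
    have h1 : rank b ≤ rank q := rank_le_alg hb hq
    have h2 : rank q < rank p := rank_lt' ⟨hsn, hred⟩
    have : rank b < rank p := h1.trans_lt h2
    rw [Ordinal.add_one_eq_succ, Ordinal.add_one_eq_succ]
    exact Order.succ_lt_succ this

/-- Every `Step` from an `AlgSN` term preserves `AlgSN` and decreases the measure. -/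
lemma step_dec : ∀ {p q : Tm}, Step p q → AlgSN p → AlgSN q ∧ O q < O p := by
  intro p q h
  induction h with
  | addZero u =>
    intro hp
    obtain ⟨hu, -⟩ := hp
    refine ⟨hu, ?_⟩
    show O u < O u + O Tm.zero + 1
    exact (lt_self_add (O_pos _)).trans (lt_self_add zero_lt_one)
  | zeroSmul u =>
    intro hp
    refine ⟨trivial, ?_⟩
    show (1 : NatOrdinal) < O u + O u
    exact lt_of_le_of_lt (one_le_O u) (lt_self_add (O_pos u))
  | oneSmul u =>
    intro hp
    exact ⟨hp, lt_self_add (O_pos u)⟩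
  | smulZero a =>
    intro hp
    exact ⟨trivial, lt_self_add zero_lt_one⟩
  | smulSmul a b u =>
    intro hp
    refine ⟨hp, ?_⟩
    show O u + O u < (O u + O u) + (O u + O u)
    exact lt_self_add (lt_of_lt_of_le (O_pos u) natOrd_self_le_add)
  | smulAdd a u v =>
    intro hp
    obtain ⟨hu, hv⟩ := hp
    refine ⟨⟨hu, hv⟩, ?_⟩
    show (O u + O u) + (O v + O v) + 1 < (O u + O v + 1) + (O u + O v + 1)
    have e : (O u + O v + 1) + (O u + O v + 1)
        = ((O u + O u) + (O v + O v) + 1) + 1 := by abel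
    rw [e]
    exact lt_self_add zero_lt_one
  | factor a b u =>
    intro hp
    obtain ⟨hu, -⟩ := hp
    refine ⟨hu, ?_⟩
    show O u + O u < (O u + O u) + (O u + O u) + 1
    exact (lt_self_add (lt_of_lt_of_le (O_pos u) natOrd_self_le_add)).trans
      (lt_self_add zero_lt_one)
  | factorOne a u =>
    intro hp
    obtain ⟨hu, -⟩ := hp
    refine ⟨hu, ?_⟩
    show O u + O u < (O u + O u) + O u + 1
    exact (lt_self_add (O_pos u)).trans (lt_self_add zero_lt_one)
  | factorBare u =>
    intro hp
    obtain ⟨hu, -⟩ := hp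
    refine ⟨hu, ?_⟩
    show O u + O u < O u + O u + 1
    exact lt_self_add zero_lt_one
  | appAddL u v w =>
    exact fun hp => step_base trivial hp (red_of_step (Step.appAddL u v w))
  | appAddR u v w =>
    exact fun hp => step_base trivial hp (red_of_step (Step.appAddR u v w))
  | appSmulL a u v =>
    exact fun hp => step_base trivial hp (red_of_step (Step.appSmulL a u v))
  | appSmulR a u v =>
    exact fun hp => step_base trivial hp (red_of_step (Step.appSmulR a u v))
  | appZeroL u =>
    exact fun hp => step_base trivial hp (red_of_step (Step.appZeroL u))
  | appZeroR u =>
    exact fun hp => step_base trivial hp (red_of_step (Step.appZeroR u))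
  | beta U t b hb =>
    exact fun hp => step_base trivial hp (red_of_step (Step.beta U t b hb))
  | tbeta t U =>
    exact fun hp => step_base trivial hp (red_of_step (Step.tbeta t U))
  | addL r hst ih =>
    intro hp
    obtain ⟨ht, hr⟩ := hp
    obtain ⟨ht', hlt⟩ := ih ht
    refine ⟨⟨ht', hr⟩, ?_⟩
    show O _ + O r + 1 < O _ + O r + 1
    exact add_lt_add_right' (add_lt_add_right' hlt _) _
  | smulC a hst ih =>
    intro hp
    obtain ⟨ht', hlt⟩ := ih hp
    refine ⟨ht', ?_⟩
    show O _ + O _ < O _ + O _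
    exact (add_lt_add_right' hlt _).trans (add_lt_add_right hlt _)
  | appL r hst ih =>
    exact fun hp => step_base trivial hp (red_of_step (Step.appL r hst))
  | appR t hst ih =>
    exact fun hp => step_base trivial hp (red_of_step (Step.appR t hst))
  | tappC U hst ih =>
    exact fun hp => step_base trivial hp (red_of_step (Step.tappC U hst))
  | lamC U hst ih =>
    exact fun hp => step_base trivial hp (red_of_step (Step.lamC U hst))
  | tlamC hst ih =>
    exact fun hp => step_base trivial hp (red_of_step (Step.tlamC hst))

/-- Main lemma: algebraically SN terms are strongly normalising. -/
lemma sn_of_algSN : ∀ t : Tm, AlgSN t → SN t := by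
  suffices H : ∀ o : NatOrdinal, ∀ t, O t = o → AlgSN t → SN t by
    exact fun t => H (O t) t rfl
  intro o
  induction o using NatOrdinal.induction with
  | _ o IH =>
    rintro t rfl halg
    refine Acc.intro t fun s hs => ?_
    obtain ⟨t₁, s₁, h1, h2, h3⟩ := hs
    have halg₁ : AlgSN t₁ := (algSN_aceq h1).1 halg
    obtain ⟨halg₂, hlt⟩ := step_dec h2 halg₁
    have hOlt : O s₁ < O t := by rw [O_aceq h1]; exact hlt
    have hsn₁ : SN s₁ := IH (O s₁) hOlt s₁ rfl halg₂
    exact sn_aceq h3 hsn₁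

end LCA


open LCA in
/-- a linear combination of strongly normalising terms is
strongly normalising. -/
theorem sn_linear_combination {t r : Tm} (ht : SN t) (hr : SN r) (a b : ℝ≥0) :
    SN (Tm.add (Tm.smul a t) (Tm.smul b r)) := by
  refine sn_of_algSN _ ⟨?_, ?_⟩
  · show AlgSN t; exact sn_algSN ht
  · show AlgSN r; exact sn_algSN hr
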